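/- Let Q, R : Matrix (Fin N) (Fin N) ℝ be positive-definite matrices such that the block matrix fromBlocks Q 1 1 R is positive semidefinite (where 1 is the N×N identity). Then trace (Q * R) ≥ N, and trace (Q * R) = N holds if and only if Q * R = 1, i.e., R = Q⁻¹. (This is the cone-complementarity relaxation underlying Algorithm 1: the nonconvex constraint Q = R⁻¹ is recovered as the minimizer of trace(QR) subject to Q, R ≻ 0 and [[Q, I],[I, R]] ⪰ 0, with optimal value N per block.) -/

import Mathlib

open Matrix
open scoped MatrixOrder

private lemma psd_trace_nonneg {n : ℕ} {M : Matrix (Fin n) (Fin n) ℝ}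
    (hM : M.PosSemidef) : 0 ≤ M.trace := by
  rw [Matrix.trace]
  apply Finset.sum_nonneg
  intro i _
  exact hM.diag_nonneg

private lemma psd_trace_eq_zero {n : ℕ} {M : Matrix (Fin n) (Fin n) ℝ}
    (hM : M.PosSemidef) (ht : M.trace = 0) : M = 0 := by
  obtain ⟨B, rfl⟩ : ∃ B : Matrix (Fin n) (Fin n) ℝ, M = Bᴴ * B :=
    ⟨CFC.sqrt M, by
      rw [(CFC.sqrt_nonneg M).posSemidef.1, CFC.sqrt_mul_sqrt_self M hM.nonneg]⟩
  rw [Matrix.conjTranspose_mul_self_eq_zero]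
  have h2 : ∑ j, ∑ i, (B i j) ^ 2 = 0 := by
    rw [← ht, Matrix.trace]
    simp [Matrix.mul_apply, Matrix.diag, sq]
  have h3 : ∀ j i, B i j = 0 := by
    intro j i
    have hjz : ∑ i, (B i j) ^ 2 = 0 :=
      (Finset.sum_eq_zero_iff_of_nonneg
        (fun j _ => Finset.sum_nonneg fun i _ => sq_nonneg (B i j))).mp h2 j (Finset.mem_univ j)
    have hz := (Finset.sum_eq_zero_iff_of_nonneg
        (fun i _ => sq_nonneg (B i j))).mp hjz i (Finset.mem_univ i)
    exact pow_eq_zero_iff two_ne_zero |>.mp hz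
  ext i j
  simp [h3 j i]

/-- Cone-complementarity relaxation: if `Q, R ≻ 0` and `[[Q, I],[I, R]] ⪰ 0`, then
`trace (Q * R) ≥ N`, with equality iff `Q * R = 1` (i.e. `R = Q⁻¹`). -/
theorem cone_complementarity {N : ℕ} (Q R : Matrix (Fin N) (Fin N) ℝ)
    (hQ : Q.PosDef) (hR : R.PosDef)
    (h : (Matrix.fromBlocks Q 1 1 R).PosSemidef) :
    (N : ℝ) ≤ (Q * R).trace ∧ ((Q * R).trace = (N : ℝ) ↔ Q * R = 1) := by
  haveI : Invertible Q := Q.invertibleOfIsUnitDet hQ.det_pos.ne'.isUnit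
  -- Schur complement: R - Q⁻¹ is PSD
  have h' : (Matrix.fromBlocks Q 1 (1 : Matrix (Fin N) (Fin N) ℝ)ᴴ R).PosSemidef := by
    rwa [conjTranspose_one]
  have hS : (R - Q⁻¹).PosSemidef := by
    have := (Matrix.PosDef.fromBlocks₁₁ 1 R hQ).mp h'
    simpa using this
  set C := CFC.sqrt (R - Q⁻¹) with hC
  have hCh : Cᴴ = C := (CFC.sqrt_nonneg (R - Q⁻¹)).posSemidef.1
  have hCC : C * C = R - Q⁻¹ := CFC.sqrt_mul_sqrt_self _ hS.nonneg
  have hM : (C * Q * Cᴴ).PosSemidef := hQ.posSemidef.mul_mul_conjTranspose_same C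
  have htr : (Q * R).trace = (N : ℝ) + (C * Q * Cᴴ).trace := by
    have : Q * R = 1 + Q * (R - Q⁻¹) := by
      rw [Matrix.mul_sub, Matrix.mul_nonsing_inv Q hQ.det_pos.ne'.isUnit]
      noncomm_ring
    rw [this, Matrix.trace_add, Matrix.trace_one, ← hCC]
    rw [show Q * (C * C) = (Q * C) * C by noncomm_ring, Matrix.trace_mul_comm, hCh,
      Fintype.card_fin, show C * (Q * C) = C * Q * C by noncomm_ring]
  constructor
  · rw [htr]
    linarith [psd_trace_nonneg hM]
  · constructor
    · intro he
      have htz : (C * Q * Cᴴ).trace = 0 := by rw [htr] at he; linarith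
      have hMz : C * Q * Cᴴ = 0 := psd_trace_eq_zero hM htz
      -- deduce C = 0
      set D := CFC.sqrt Q with hD
      have hDh : Dᴴ = D := (CFC.sqrt_nonneg Q).posSemidef.1
      have hDD : D * D = Q := CFC.sqrt_mul_sqrt_self _ hQ.posSemidef.nonneg
      have key : (D * C)ᴴ * (D * C) = 0 := by
        rw [conjTranspose_mul, hDh, hCh]
        calc C * D * (D * C) = C * (D * D) * C := by noncomm_ring
        _ = C * Q * Cᴴ := by rw [hDD, hCh]
        _ = 0 := hMz
      have hDC : D * C = 0 := Matrix.conjTranspose_mul_self_eq_zero.mp key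
      have hQC : Q * C = 0 := by
        rw [← hDD, Matrix.mul_assoc, hDC, Matrix.mul_zero]
      have hC0 : C = 0 := by
        have := congrArg (fun M => Q⁻¹ * M) hQC
        simpa [← Matrix.mul_assoc, Matrix.nonsing_inv_mul Q hQ.det_pos.ne'.isUnit] using this
      have hRQ : R = Q⁻¹ := by
        have : (0 : Matrix (Fin N) (Fin N) ℝ) = R - Q⁻¹ := by
          rw [← hCC, hC0, Matrix.mul_zero]
        exact (sub_eq_zero.mp this.symm)
      rw [hRQ, Matrix.mul_nonsing_inv Q hQ.det_pos.ne'.isUnit]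
    · intro he
      rw [he, Matrix.trace_one]
      simp
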